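/- Let u₁, …, u_N be points in the unit sphere of ℝⁿ with N ≥ n. Then (Vol(conv{±u₁, …, ±u_N}) / Vol(B₂ⁿ))^{1/n} ≤ C √(log(1 + N/n)/n) for a universal constant C. -/

import Mathlib

open Finset
open scoped RealInnerProductSpace
variable {E : Type*} [NormedAddCommGroup E] [InnerProductSpace ℝ E]

lemma maurey_identity (s : Finset E) (w : E → ℝ) (x : E)
    (hw1 : ∑ y ∈ s, w y = 1) (hx : ∑ y ∈ s, w y • y = x) (a : E) :
    ∑ y ∈ s, w y * ‖a - y‖ ^ 2
      = ‖a - x‖ ^ 2 - ‖x‖ ^ 2 + ∑ y ∈ s, w y * ‖y‖ ^ 2 := by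
  have hinner : ∑ y ∈ s, w y * (inner ℝ a y : ℝ) = (inner ℝ a x : ℝ) := by
    rw [← hx, inner_sum]
    exact Finset.sum_congr rfl fun y _ => by rw [real_inner_smul_right]
  have expand : ∀ y : E, ‖a - y‖ ^ 2 = ‖a‖ ^ 2 - 2 * (inner ℝ a y : ℝ) + ‖y‖ ^ 2 :=
    fun y => norm_sub_sq_real a y
  calc ∑ y ∈ s, w y * ‖a - y‖ ^ 2
      = ∑ y ∈ s, (w y * ‖a‖ ^ 2 - 2 * (w y * (inner ℝ a y : ℝ)) + w y * ‖y‖ ^ 2) := by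
        refine Finset.sum_congr rfl fun y _ => ?_
        rw [expand y]; ring
    _ = (∑ y ∈ s, w y) * ‖a‖ ^ 2 - 2 * (∑ y ∈ s, w y * (inner ℝ a y : ℝ))
          + ∑ y ∈ s, w y * ‖y‖ ^ 2 := by
        rw [Finset.sum_add_distrib, Finset.sum_sub_distrib, ← Finset.sum_mul,
          ← Finset.mul_sum]
    _ = ‖a - x‖ ^ 2 - ‖x‖ ^ 2 + ∑ y ∈ s, w y * ‖y‖ ^ 2 := by
        rw [hw1, hinner, norm_sub_sq_real a x]; ring

lemma maurey_select (s : Finset E) (w : E → ℝ) (x : E)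
    (hw0 : ∀ y ∈ s, 0 ≤ w y) (hw1 : ∑ y ∈ s, w y = 1)
    (hx : ∑ y ∈ s, w y • y = x) (hnorm : ∀ y ∈ s, ‖y‖ ≤ 1) (a : E) :
    ∃ y ∈ s, ‖a - y‖ ^ 2 ≤ ‖a - x‖ ^ 2 + 1 := by
  have hsum : ∑ y ∈ s, w y * ‖a - y‖ ^ 2 ≤ ‖a - x‖ ^ 2 + 1 := by
    rw [maurey_identity s w x hw1 hx a]
    have h1 : ∑ y ∈ s, w y * ‖y‖ ^ 2 ≤ 1 := by
      rw [← hw1]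
      refine Finset.sum_le_sum fun y hy => ?_
      have h2 : ‖y‖ ^ 2 ≤ 1 := by nlinarith [hnorm y hy, norm_nonneg y]
      calc w y * ‖y‖ ^ 2 ≤ w y * 1 := mul_le_mul_of_nonneg_left h2 (hw0 y hy)
        _ = w y := mul_one _
    nlinarith [sq_nonneg ‖x‖]
  by_contra hcon
  push_neg at hcon
  obtain ⟨y₀, hy₀s, hy₀⟩ : ∃ y ∈ s, (0:ℝ) < w y := by
    apply Finset.exists_lt_of_sum_lt (f := fun _ => (0:ℝ))
    simp [hw1]
  have hlt : ∑ y ∈ s, w y * (‖a - x‖ ^ 2 + 1) < ∑ y ∈ s, w y * ‖a - y‖ ^ 2 := by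
    refine Finset.sum_lt_sum (fun y hy => ?_) ⟨y₀, hy₀s, ?_⟩
    · exact mul_le_mul_of_nonneg_left (hcon y hy).le (hw0 y hy)
    · exact mul_lt_mul_of_pos_left (hcon y₀ hy₀s) hy₀
  rw [← Finset.sum_mul, hw1, one_mul] at hlt
  linarith

lemma maurey_multiset (s : Finset E) (w : E → ℝ) (x : E)
    (hw0 : ∀ y ∈ s, 0 ≤ w y) (hw1 : ∑ y ∈ s, w y = 1)
    (hx : ∑ y ∈ s, w y • y = x) (hnorm : ∀ y ∈ s, ‖y‖ ≤ 1) (k : ℕ) :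
    ∃ l : Multiset E, Multiset.card l = k ∧ (∀ y ∈ l, y ∈ s) ∧
      ‖(k : ℝ) • x - l.sum‖ ^ 2 ≤ k := by
  induction k with
  | zero => exact ⟨0, by simp⟩
  | succ k ih =>
    obtain ⟨l, hcard, hmem, hle⟩ := ih
    obtain ⟨y, hys, hy⟩ := maurey_select s w x hw0 hw1 hx hnorm
      (((k : ℝ) + 1) • x - l.sum)
    refine ⟨y ::ₘ l, by simp [hcard], ?_, ?_⟩
    · intro z hz
      rcases Multiset.mem_cons.1 hz with h | h
      · exact h ▸ hys
      · exact hmem z h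
    · have harg : ((k : ℝ) + 1) • x - l.sum - x = (k : ℝ) • x - l.sum := by
        rw [add_smul, one_smul]; abel
      rw [harg] at hy
      have : ((k + 1 : ℕ) : ℝ) • x - (y ::ₘ l).sum
          = ((k : ℝ) + 1) • x - l.sum - y := by
        rw [Multiset.sum_cons]; push_cast; abel
      rw [this]
      push_cast
      linarith


lemma two_mul_le_exp {x : ℝ} (hx : 0 ≤ x) : 2 * x ≤ Real.exp x := by
  have h := Real.add_one_le_exp (x / 2)
  have hsq : Real.exp (x / 2) * Real.exp (x / 2) = Real.exp x := by
    rw [← Real.exp_add]; ring_nf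
  nlinarith [sq_nonneg (x / 2 - 1), Real.exp_pos (x / 2)]

lemma pow_self_le_exp_mul_factorial : ∀ k : ℕ, (k : ℝ) ^ k ≤ Real.exp k * (k.factorial : ℝ)
  | 0 => by simp
  | (k + 1) => by
    have key : ((k : ℝ) + 1) ^ k ≤ Real.exp 1 * (Real.exp k * (k.factorial : ℝ)) := by
      rcases Nat.eq_zero_or_pos k with rfl | hk
      · simpa using Real.one_le_exp zero_le_one
      · have hkR : (0 : ℝ) < k := by exact_mod_cast hk
        have h1 : ((k : ℝ) + 1) = k * (1 + 1 / k) := by field_simp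
        have h2 : (1 + 1 / (k:ℝ)) ^ k ≤ Real.exp 1 := by
          have h3 : (1 + 1 / (k:ℝ)) ≤ Real.exp (1 / k) := by
            have := Real.add_one_le_exp (1 / (k:ℝ)); linarith
          calc (1 + 1 / (k:ℝ)) ^ k ≤ Real.exp (1 / k) ^ k := by
                apply pow_le_pow_left₀ (by positivity) h3
            _ = Real.exp ((k : ℝ) * (1 / k)) := (Real.exp_nat_mul _ _).symm
            _ = Real.exp 1 := by rw [mul_one_div, div_self hkR.ne']
        calc ((k : ℝ) + 1) ^ k = (k : ℝ) ^ k * (1 + 1 / k) ^ k := by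
              rw [h1, mul_pow]
          _ ≤ (Real.exp k * (k.factorial : ℝ)) * Real.exp 1 := by
              apply mul_le_mul (pow_self_le_exp_mul_factorial k) h2 (by positivity)
                (by positivity)
          _ = Real.exp 1 * (Real.exp k * (k.factorial : ℝ)) := by ring
    have hstep : ((k : ℝ) + 1) ^ (k + 1) ≤ ((k:ℝ) + 1) * (Real.exp 1 * (Real.exp k * k.factorial)) := by
      rw [pow_succ]
      calc ((k : ℝ) + 1) ^ k * ((k:ℝ) + 1) ≤ (Real.exp 1 * (Real.exp k * (k.factorial : ℝ))) * ((k:ℝ)+1) :=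
            mul_le_mul_of_nonneg_right key (by positivity)
        _ = ((k:ℝ) + 1) * (Real.exp 1 * (Real.exp k * k.factorial)) := by ring
    have : Real.exp ((k:ℕ) + 1 : ℕ) * ((k+1).factorial : ℝ)
        = ((k:ℝ) + 1) * (Real.exp 1 * (Real.exp k * k.factorial)) := by
      rw [Nat.factorial_succ]
      push_cast
      rw [Real.exp_add]
      ring
    rw [this]
    push_cast at hstep ⊢
    exact hstep

lemma arith_card (n N k : ℕ) (hn : 0 < n) (hnN : n ≤ N)
    (hL2 : Real.log 2 ≤ Real.log (1 + (N:ℝ)/n))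
    (hk1 : (n:ℝ) / Real.log (1 + (N:ℝ)/n) ≤ k)
    (hk2 : (k:ℝ) ≤ 2 * n / Real.log (1 + (N:ℝ)/n)) :
    (((2*N + k).choose k : ℕ) : ℝ) ≤ Real.exp (12*n) := by
  set L : ℝ := Real.log (1 + (N:ℝ)/n) with hLdef
  have hnR : (0:ℝ) < n := by exact_mod_cast hn
  have hNR : (0:ℝ) < N := by exact_mod_cast hn.trans_le hnN
  have hLpos : 0 < L := lt_of_lt_of_le (Real.log_pos one_lt_two) hL2
  have hkpos : 0 < (k:ℝ) := lt_of_lt_of_le (by positivity) hk1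
  have hkpos' : 0 < k := by exact_mod_cast hkpos
  set t : ℝ := Real.exp L with htdef
  have ht2 : 2 ≤ t := by
    calc (2:ℝ) = Real.exp (Real.log 2) := (Real.exp_log two_pos).symm
      _ ≤ t := Real.exp_le_exp.2 hL2
  have hexpL : t - 1 = (N:ℝ)/n := by
    have : t = 1 + (N:ℝ)/n := Real.exp_log (by positivity)
    linarith
  set m : ℕ := 2*N + k with hmdef
  have hmR : (0:ℝ) < m := by positivity
  -- choose bound via factorial
  have h1 : ((m.choose k : ℕ) : ℝ) ≤ (m:ℝ)^k / (k.factorial : ℝ) := by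
    have := Nat.choose_le_pow_div (α := ℝ) k m
    simpa using this
  have hfac : (0:ℝ) < (k.factorial : ℝ) := by exact_mod_cast k.factorial_pos
  have h2 : ((m.choose k : ℕ) : ℝ) ≤ (Real.exp 1 * ((m:ℝ)/k))^k := by
    have hA : ((m.choose k : ℕ) : ℝ) * (k:ℝ)^k
        ≤ ((m:ℝ)^k / (k.factorial : ℝ)) * (Real.exp k * (k.factorial : ℝ)) :=
      mul_le_mul h1 (pow_self_le_exp_mul_factorial k) (by positivity) (by positivity)
    have hB : ((m:ℝ)^k / (k.factorial : ℝ)) * (Real.exp k * (k.factorial : ℝ))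
        = Real.exp k * (m:ℝ)^k := by field_simp
    have hC : (Real.exp 1 * ((m:ℝ)/k))^k = Real.exp k * (m:ℝ)^k / (k:ℝ)^k := by
      rw [mul_pow, div_pow, ← Real.exp_nat_mul, mul_one, mul_div_assoc]
    rw [hC, le_div_iff₀ (by positivity)]
    rw [hB] at hA
    exact hA
  -- bound e * m / k ≤ exp (6 L)
  have hmk : (m:ℝ)/k ≤ 2*L*(t-1) + 1 := by
    have hinv : 1/(k:ℝ) ≤ L/n := by
      rw [div_le_div_iff₀ hkpos hnR, one_mul]
      calc (n:ℝ) ≤ (n/L) * L := by rw [div_mul_cancel₀]; exact hLpos.ne'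
        _ ≤ k * L := mul_le_mul_of_nonneg_right hk1 hLpos.le
        _ = L * k := mul_comm _ _
    have : (m:ℝ)/k = 2*N/k + 1 := by
      push_cast [hmdef]
      field_simp
    rw [this]
    have h2N : 2*(N:ℝ)/k ≤ 2*L*(t-1) := by
      calc 2*(N:ℝ)/k = 2*N * (1/k) := by ring
        _ ≤ 2*N * (L/n) := by
            apply mul_le_mul_of_nonneg_left hinv (by positivity)
        _ = 2*L*((N:ℝ)/n) := by ring
        _ = 2*L*(t-1) := by rw [hexpL]
    linarith
  have hkey : Real.exp 1 * ((m:ℝ)/k) ≤ Real.exp (6*L) := by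
    have he1 : Real.exp 1 ≤ t * t := by
      have h12 : (1:ℝ) ≤ 2*L := by
        have : (0.6931471803 : ℝ) < Real.log 2 := Real.log_two_gt_d9
        linarith
      calc Real.exp 1 ≤ Real.exp (2*L) := Real.exp_le_exp.2 h12
        _ = t * t := by rw [htdef, ← Real.exp_add]; congr 1; ring
    have h6L : Real.exp (6*L) = t^6 := by
      rw [htdef, ← Real.exp_nat_mul]; norm_num
    rw [h6L]
    have h2L : 2*L ≤ t := two_mul_le_exp hLpos.le
    have hmk' : (m:ℝ)/k ≤ t*(t-1) + 1 := by nlinarith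
    have hmknn : (0:ℝ) ≤ (m:ℝ)/k := by positivity
    nlinarith [Real.exp_pos 1, sq_nonneg t, sq_nonneg (t*t)]
  have h3 : (Real.exp 1 * ((m:ℝ)/k))^k ≤ Real.exp (6*L) ^ k :=
    pow_le_pow_left₀ (by positivity) hkey k
  have h4 : Real.exp (6*L) ^ k = Real.exp (6*L*k) := by
    rw [← Real.exp_nat_mul]; congr 1; ring
  have h5 : 6*L*k ≤ 12*n := by
    have : L * k ≤ 2 * n := by
      rw [le_div_iff₀ hLpos] at hk2
      linarith [hk2]
    linarith
  calc (((2*N + k).choose k : ℕ) : ℝ) = ((m.choose k : ℕ) : ℝ) := by rw [hmdef]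
    _ ≤ (Real.exp 1 * ((m:ℝ)/k))^k := h2
    _ ≤ Real.exp (6*L) ^ k := h3
    _ = Real.exp (6*L*k) := h4
    _ ≤ Real.exp (12*n) := Real.exp_le_exp.2 h5


open MeasureTheory Finset Metric
open scoped ENNReal

/-- Carl–Pajor / Gluskin / Bárány–Füredi volume bound: for `N ≥ n` points on the unit
sphere of `ℝⁿ`, `(Vol(conv{±u₁,…,±u_N}) / Vol(B₂ⁿ))^{1/n} ≤ C √(log(1 + N/n)/n)`. -/
theorem volume_absconv_points_on_sphere :
    ∃ C : ℝ, 0 < C ∧ ∀ (n N : ℕ), 0 < n → n ≤ N →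
      ∀ u : Fin N → EuclideanSpace ℝ (Fin n), (∀ i, ‖u i‖ = 1) →
        (volume (convexHull ℝ (Set.range u ∪ Set.range (fun i => -u i))) /
            volume (Metric.ball (0 : EuclideanSpace ℝ (Fin n)) 1)) ^ ((1 : ℝ) / n)
          ≤ ENNReal.ofReal (C * Real.sqrt (Real.log (1 + (N : ℝ) / n) / n)) := by
  refine ⟨Real.exp 12, Real.exp_pos 12, fun n N hn hnN u hu => ?_⟩
  classical
  have hnR : (0:ℝ) < n := by exact_mod_cast hn
  set s : Finset (EuclideanSpace ℝ (Fin n)) := (Finset.image u Finset.univ) ∪ (Finset.image (fun i => -u i) Finset.univ)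
    with hsdef
  have hcoe : (↑s : Set (EuclideanSpace ℝ (Fin n))) = Set.range u ∪ Set.range (fun i => -u i) := by
    simp [hsdef, Finset.coe_union]
  have hscard : s.card ≤ 2 * N := by
    calc s.card ≤ (Finset.image u Finset.univ).card
          + (Finset.image (fun i => -u i) Finset.univ).card := Finset.card_union_le _ _
      _ ≤ N + N := by
          gcongr <;> exact (Finset.card_image_le).trans (by simp)
      _ = 2 * N := by ring
  have hsnorm : ∀ y ∈ s, ‖y‖ ≤ 1 := by
    intro y hy
    simp only [hsdef, Finset.mem_union, Finset.mem_image, Finset.mem_univ, true_and] at hy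
    rcases hy with ⟨i, rfl⟩ | ⟨i, rfl⟩
    · rw [hu i]
    · rw [norm_neg, hu i]
  set volB := volume (Metric.ball (0 : EuclideanSpace ℝ (Fin n)) 1) with hvolB
  have hB0 : volB ≠ 0 := (measure_ball_pos _ _ one_pos).ne'
  have hBtop : volB ≠ ⊤ := measure_ball_lt_top.ne
  set K := convexHull ℝ (↑s : Set (EuclideanSpace ℝ (Fin n))) with hK
  rw [← hcoe]
  set L : ℝ := Real.log (1 + (N:ℝ)/n) with hLdef
  have hNn1 : (1:ℝ) ≤ (N:ℝ)/n := by
    rw [le_div_iff₀ hnR, one_mul]; exact_mod_cast hnN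
  have hL2 : Real.log 2 ≤ L := by
    apply Real.log_le_log two_pos
    linarith
  have hLpos : 0 < L := lt_of_lt_of_le (Real.log_pos one_lt_two) hL2
  -- covering bound for each k
  have hcover : ∀ k : ℕ, 0 < k →
      volume K ≤ (Fintype.card (Sym {y // y ∈ s} k) : ℝ≥0∞) *
        (ENNReal.ofReal ((Real.sqrt k)⁻¹ ^ n) * volB) := by
    intro k hk
    have hkR : (0:ℝ) < k := by exact_mod_cast hk
    set r : ℝ := (Real.sqrt k)⁻¹ with hrdef
    have hr0 : (0:ℝ) ≤ r := by positivity
    set c : Sym {y // y ∈ s} k → EuclideanSpace ℝ (Fin n) :=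
      fun m => ((k:ℝ))⁻¹ • ((m.1.map Subtype.val).sum) with hcdef
    have hsub : K ⊆ ⋃ m, Metric.closedBall (c m) r := by
      intro x hx
      rw [hK, Finset.convexHull_eq] at hx
      obtain ⟨w, hw0, hw1, hxc⟩ := hx
      rw [Finset.centerMass_eq_of_sum_1 _ _ hw1] at hxc
      simp only [id] at hxc
      obtain ⟨l, hlc, hlm, hle⟩ := maurey_multiset s w x hw0 hw1 hxc hsnorm k
      set m : Sym {y // y ∈ s} k :=
        ⟨l.attach.map (fun z => (⟨z.1, hlm z.1 z.2⟩ : {y // y ∈ s})), by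
          simp [hlc]⟩ with hmdef
      have hmap : (m.1.map Subtype.val) = l := by
        simp only [hmdef, Multiset.map_map, Function.comp]
        exact l.attach_map_val
      refine Set.mem_iUnion.2 ⟨m, ?_⟩
      rw [Metric.mem_closedBall, dist_eq_norm, hcdef]
      simp only [hmap]
      have heq : x - (k:ℝ)⁻¹ • l.sum = (k:ℝ)⁻¹ • ((k:ℝ) • x - l.sum) := by
        rw [smul_sub, smul_smul, inv_mul_cancel₀ hkR.ne', one_smul]
      rw [heq, norm_smul]
      have hz : ‖(k:ℝ) • x - l.sum‖ ≤ Real.sqrt k := by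
        exact (Real.le_sqrt (norm_nonneg _) (by positivity)).2 hle
      calc |((k:ℝ))⁻¹| * ‖(k:ℝ) • x - l.sum‖
          ≤ ((k:ℝ))⁻¹ * Real.sqrt k := by
            rw [abs_of_nonneg (by positivity)]
            exact mul_le_mul_of_nonneg_left hz (by positivity)
        _ = r := by
            rw [hrdef, ← Real.mul_self_sqrt hkR.le]
            have hsq : (0:ℝ) < Real.sqrt k := Real.sqrt_pos.2 hkR
            field_simp
            rw [Real.sqrt_sq hsq.le]
    calc volume K ≤ volume (⋃ m, Metric.closedBall (c m) r) := measure_mono hsub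
      _ ≤ ∑ m : Sym {y // y ∈ s} k, volume (Metric.closedBall (c m) r) :=
          measure_iUnion_fintype_le _ _
      _ = ∑ _m : Sym {y // y ∈ s} k, ENNReal.ofReal (r ^ n) * volB := by
          refine Finset.sum_congr rfl fun m _ => ?_
          rw [hvolB, Measure.addHaar_closedBall _ _ hr0, finrank_euclideanSpace_fin]
      _ = (Fintype.card (Sym {y // y ∈ s} k) : ℝ≥0∞) *
            (ENNReal.ofReal (r ^ n) * volB) := by
          rw [Finset.sum_const, Finset.card_univ, nsmul_eq_mul]
  -- case split
  rcases le_or_gt (n:ℝ) L with hcase | hcase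
  · -- trivial bound
    have hKB : volume K ≤ volB := by
      have h1 : K ⊆ Metric.closedBall (0: EuclideanSpace ℝ (Fin n)) 1 := by
        rw [hK]
        apply convexHull_min _ (convex_closedBall _ _)
        intro y hy
        rw [Metric.mem_closedBall, dist_zero_right]
        exact hsnorm y hy
      calc volume K ≤ volume (Metric.closedBall (0: EuclideanSpace ℝ (Fin n)) 1) := measure_mono h1
        _ = volB := by
            rw [hvolB, Measure.addHaar_closedBall _ _ zero_le_one,
              finrank_euclideanSpace_fin, one_pow, ENNReal.ofReal_one, one_mul]
    have hdiv1 : volume K / volB ≤ 1 := by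
      rw [ENNReal.div_le_iff hB0 hBtop, one_mul]; exact hKB
    calc (volume K / volB) ^ ((1:ℝ)/n) ≤ (1 : ℝ≥0∞) ^ ((1:ℝ)/n) :=
          ENNReal.rpow_le_rpow hdiv1 (by positivity)
      _ = 1 := ENNReal.one_rpow _
      _ ≤ ENNReal.ofReal (Real.exp 12 * Real.sqrt (L / n)) := by
          rw [ENNReal.one_le_ofReal]
          have h1 : (1:ℝ) ≤ Real.sqrt (L/n) := by
            rw [show (1:ℝ) = Real.sqrt 1 from (Real.sqrt_one).symm]
            apply Real.sqrt_le_sqrt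
            rw [le_div_iff₀ hnR, one_mul]; exact hcase
          nlinarith [Real.one_le_exp (by norm_num : (0:ℝ) ≤ 12)]
  · -- main case
    set k : ℕ := ⌈(n:ℝ)/L⌉₊ with hkdef
    have hk1 : (n:ℝ)/L ≤ k := Nat.le_ceil _
    have hkpos : 0 < k := Nat.ceil_pos.2 (by positivity)
    have hkR : (0:ℝ) < k := by exact_mod_cast hkpos
    have hnL1 : (1:ℝ) ≤ (n:ℝ)/L := (one_le_div hLpos).2 hcase.le
    have hk2 : (k:ℝ) ≤ 2*n/L := by
      have h1 : (k:ℝ) < (n:ℝ)/L + 1 := Nat.ceil_lt_add_one (by positivity)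
      have h2 : 2*(n:ℝ)/L = (n:ℝ)/L + (n:ℝ)/L := by ring
      linarith
    set card : ℕ := Fintype.card (Sym {y // y ∈ s} k) with hcarddef
    set r : ℝ := (Real.sqrt k)⁻¹ with hrdef
    have hr0 : (0:ℝ) ≤ r := by positivity
    have hdiv : volume K / volB ≤ (card : ℝ≥0∞) * ENNReal.ofReal (r ^ n) := by
      rw [ENNReal.div_le_iff hB0 hBtop, mul_assoc]
      exact hcover k hkpos
    -- cardinality bound
    have hcard_exp : (card : ℝ) ≤ Real.exp (12*n) := by
      have h1 : card = (s.card + k - 1).choose k := by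
        rw [hcarddef, Sym.card_sym_eq_choose, Fintype.card_coe]
      have h2 : (s.card + k - 1).choose k ≤ (2*N + k).choose k :=
        Nat.choose_le_choose k (by omega)
      calc (card : ℝ) ≤ (((2*N + k).choose k : ℕ) : ℝ) := by
            rw [h1]; exact_mod_cast h2
        _ ≤ Real.exp (12*n) := arith_card n N k hn hnN hL2 hk1 hk2
    -- real-side final bound
    have hreal : (card : ℝ) ^ ((1:ℝ)/n) * r ≤ Real.exp 12 * Real.sqrt (L/n) := by
      have hA : (card : ℝ) ^ ((1:ℝ)/n) ≤ Real.exp 12 := by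
        calc (card : ℝ) ^ ((1:ℝ)/n) ≤ (Real.exp (12*n)) ^ ((1:ℝ)/n) :=
              Real.rpow_le_rpow (by positivity) hcard_exp (by positivity)
          _ = Real.exp ((12*n) * ((1:ℝ)/n)) := (Real.exp_mul _ _).symm
          _ = Real.exp 12 := by rw [mul_one_div, mul_div_assoc, div_self hnR.ne', mul_one]
      have hB : r ≤ Real.sqrt (L/n) := by
        have hLn' : L/(n:ℝ) = ((n:ℝ)/L)⁻¹ := by rw [inv_div]
        rw [hrdef, hLn', Real.sqrt_inv]
        apply inv_anti₀ (Real.sqrt_pos.2 (by positivity))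
        exact Real.sqrt_le_sqrt hk1
      exact mul_le_mul hA hB hr0 (Real.exp_pos 12).le
    -- ENNReal assembly
    calc (volume K / volB) ^ ((1:ℝ)/n)
        ≤ ((card : ℝ≥0∞) * ENNReal.ofReal (r ^ n)) ^ ((1:ℝ)/n) :=
          ENNReal.rpow_le_rpow hdiv (by positivity)
      _ = (ENNReal.ofReal ((card:ℝ) * r ^ n)) ^ ((1:ℝ)/n) := by
          rw [ENNReal.ofReal_mul (by positivity), ENNReal.ofReal_natCast]
      _ = ENNReal.ofReal (((card:ℝ) * r ^ n) ^ ((1:ℝ)/n)) := by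
          rw [ENNReal.ofReal_rpow_of_nonneg (by positivity) (by positivity)]
      _ = ENNReal.ofReal ((card:ℝ) ^ ((1:ℝ)/n) * r) := by
          congr 1
          rw [Real.mul_rpow (by positivity) (by positivity)]
          congr 1
          rw [← Real.rpow_natCast r n, ← Real.rpow_mul hr0, mul_one_div,
            div_self hnR.ne', Real.rpow_one]
      _ ≤ ENNReal.ofReal (Real.exp 12 * Real.sqrt (L/n)) :=
          ENNReal.ofReal_le_ofReal hreal
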